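/- For n ≥ 2, the free abelian group ℤ² = ⟨a, b⟩ with the isomorphism φ: ⟨b⁻¹⟩ → ⟨aⁿb⁻¹⟩ sending b⁻¹ to aⁿb⁻¹ yields an HNN extension (ℤ², ⟨b⁻¹⟩, ⟨aⁿb⁻¹⟩, t) isomorphic to a semidirect product F₂ ⋊ ℤ where F₂ is the free group of rank 2. -/

import Mathlib

open HNNExtension SemidirectProduct Multiplicative

namespace HNNaux

abbrev F2 := FreeGroup (Fin 2)

def xx : F2 := FreeGroup.of 0
def yy : F2 := FreeGroup.of 1

def αHom (n : ℕ) : F2 →* F2 := FreeGroup.lift (fun i => if i = 0 then xx else xx ^ (n : ℤ) * yy)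
def βHom (n : ℕ) : F2 →* F2 := FreeGroup.lift (fun i => if i = 0 then xx else xx ^ (-(n : ℤ)) * yy)

lemma αβ (n : ℕ) : (αHom n).comp (βHom n) = MonoidHom.id _ := by
  ext i
  fin_cases i <;> simp [αHom, βHom, xx, yy, ← zpow_add]

lemma βα (n : ℕ) : (βHom n).comp (αHom n) = MonoidHom.id _ := by
  ext i
  fin_cases i <;> simp [αHom, βHom, xx, yy, ← zpow_add]

def α (n : ℕ) : MulAut F2 := MonoidHom.toMulEquiv (αHom n) (βHom n) (βα n) (αβ n)

lemma α_x (n : ℕ) : α n xx = xx := by simp [α, αHom, xx]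
lemma α_y (n : ℕ) : α n yy = xx ^ (n : ℤ) * yy := by simp [α, αHom, xx, yy]

lemma αpow_x (n : ℕ) (k : ℤ) : (α n ^ k) xx = xx := by
  induction k using Int.induction_on with
  | zero => simp
  | succ k ih =>
    have : (α n ^ ((k : ℤ) + 1)) xx = (α n ^ (k : ℤ)) (α n xx) := by
      rw [zpow_add, zpow_one]; rfl
    rw [this, α_x, ih]
  | pred k ih =>
    have : (α n ^ (-(k : ℤ) - 1)) (α n xx) = (α n ^ (-(k : ℤ))) xx := by
      rw [← MulAut.mul_apply]; congr 1; rw [← zpow_add_one]; ring_nf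
    rw [α_x] at this
    rw [this, ih]

lemma αpow_xzpow (n : ℕ) (k p : ℤ) : (α n ^ k) (xx ^ p) = xx ^ p := by
  rw [map_zpow, αpow_x]

lemma αpow_y (n : ℕ) (k : ℤ) : (α n ^ k) yy = xx ^ ((n : ℤ) * k) * yy := by
  induction k using Int.induction_on with
  | zero => simp
  | succ k ih =>
    have : (α n ^ ((k : ℤ) + 1)) yy = (α n ^ (k : ℤ)) (α n yy) := by
      rw [zpow_add, zpow_one]; rfl
    rw [this, α_y, map_mul, αpow_xzpow, ih, ← mul_assoc, ← zpow_add]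
    ring_nf
  | pred k ih =>
    have h1 : (α n ^ (-(k : ℤ) - 1)) (α n yy) = (α n ^ (-(k : ℤ))) yy := by
      rw [← MulAut.mul_apply]; congr 1; rw [← zpow_add_one]; ring_nf
    rw [ih] at h1
    rw [α_y, map_mul, αpow_xzpow] at h1
    have he : (n : ℤ) * (-(k : ℤ)) = (n : ℤ) + (n : ℤ) * (-(k : ℤ) - 1) := by ring
    apply mul_left_cancel (a := xx ^ (n : ℤ))
    rw [h1, ← mul_assoc, ← zpow_add, ← he]

def ψψ (n : ℕ) : Multiplicative ℤ →* MulAut F2 := zpowersHom _ (α n)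

lemma ψψ_apply (n : ℕ) (k : ℤ) : ψψ n (ofAdd k) = α n ^ k := rfl

abbrev SD (n : ℕ) := SemidirectProduct F2 (Multiplicative ℤ) (ψψ n)

def gHom (n : ℕ) : Multiplicative (ℤ × ℤ) →* SD n where
  toFun g := ⟨xx ^ (toAdd g).1, ofAdd (toAdd g).2⟩
  map_one' := by
    ext <;> simp
  map_mul' g1 g2 := by
    have h : (ψψ n) (ofAdd (toAdd g1).2) (xx ^ (toAdd g2).1) = xx ^ (toAdd g2).1 :=
      αpow_xzpow n _ _
    ext
    · show xx ^ (toAdd (g1 * g2)).1 = xx ^ (toAdd g1).1 * (ψψ n) (ofAdd (toAdd g1).2) (xx ^ (toAdd g2).1)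
      rw [h, ← zpow_add]
      simp [toAdd_mul]
    · show ofAdd (toAdd (g1 * g2)).2 = ofAdd (toAdd g1).2 * ofAdd (toAdd g2).2
      simp [toAdd_mul]

lemma gHom_def (n : ℕ) (g : Multiplicative (ℤ × ℤ)) :
    gHom n g = ⟨xx ^ (toAdd g).1, ofAdd (toAdd g).2⟩ := rfl

end HNNaux


open HNNaux in
/-- For `n ≥ 2`, the HNN extension `(ℤ², ⟨b⁻¹⟩, ⟨aⁿb⁻¹⟩, t)` of the free abelian
group `ℤ² = ⟨a, b⟩` along the isomorphism sending `b⁻¹` to `aⁿb⁻¹` is isomorphic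
to a semidirect product `F₂ ⋊ ℤ` with `F₂` free of rank 2. Here `ℤ²` is written
multiplicatively with `a = (1,0)`, `b = (0,1)`. -/
theorem hnn_Z2_iso_free_by_cyclic (n : ℕ) (hn : 2 ≤ n) :
    ∀ (a b : Multiplicative (ℤ × ℤ)),
      a = Multiplicative.ofAdd (1, 0) → b = Multiplicative.ofAdd (0, 1) →
      ∀ (φ : (Subgroup.zpowers b⁻¹) ≃* (Subgroup.zpowers (a ^ n * b⁻¹))),
        ((φ ⟨b⁻¹, Subgroup.mem_zpowers _⟩ : Subgroup.zpowers (a ^ n * b⁻¹)) :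
            Multiplicative (ℤ × ℤ)) = a ^ n * b⁻¹ →
        ∃ ψ : Multiplicative ℤ →* MulAut (FreeGroup (Fin 2)),
          Nonempty
            (HNNExtension (Multiplicative (ℤ × ℤ))
                (Subgroup.zpowers b⁻¹) (Subgroup.zpowers (a ^ n * b⁻¹)) φ ≃*
              SemidirectProduct (FreeGroup (Fin 2)) (Multiplicative ℤ) ψ) := by
  intro a b ha hb φ hφ
  refine ⟨ψψ n, ⟨?_⟩⟩
  have htA : ∀ k : ℤ, toAdd (b⁻¹ ^ k) = ((0 : ℤ), -k) := by
    intro k; simp [hb, Prod.ext_iff]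
  have htB : ∀ k : ℤ, toAdd ((a ^ n * b⁻¹) ^ k) = ((n : ℤ) * k, -k) := by
    intro k; simp [ha, hb, Prod.ext_iff, mul_comm]
  have hcoe : ∀ k : ℤ, (((⟨b⁻¹, Subgroup.mem_zpowers _⟩ : Subgroup.zpowers b⁻¹) ^ k :
      Subgroup.zpowers b⁻¹) : Multiplicative (ℤ × ℤ)) = b⁻¹ ^ k := by
    intro k; rw [SubgroupClass.coe_zpow]
  have hφ' : ∀ k : ℤ, ((φ ((⟨b⁻¹, Subgroup.mem_zpowers _⟩ : Subgroup.zpowers b⁻¹) ^ k) :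
      Subgroup.zpowers (a ^ n * b⁻¹)) : Multiplicative (ℤ × ℤ)) = (a ^ n * b⁻¹) ^ k := by
    intro k; rw [map_zpow, SubgroupClass.coe_zpow, hφ]
  have cond : ∀ c : Subgroup.zpowers b⁻¹,
      SemidirectProduct.inl yy * gHom n c = gHom n (φ c : Multiplicative (ℤ × ℤ)) *
        SemidirectProduct.inl yy := by
    intro c
    obtain ⟨k, hk⟩ := c.2
    have hc : c = (⟨b⁻¹, Subgroup.mem_zpowers _⟩ : Subgroup.zpowers b⁻¹) ^ k := by
      apply Subtype.ext
      rw [hcoe k]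
      exact hk.symm
    subst hc
    rw [hφ' k, hcoe k]
    ext
    · rw [gHom_def, gHom_def, htA, htB]
      show yy * (ψψ n) 1 (xx ^ (0:ℤ)) = xx ^ ((n:ℤ) * k) * (ψψ n) (ofAdd (-k)) yy
      rw [ψψ_apply, αpow_y, zpow_zero, map_one, mul_one, ← mul_assoc, ← zpow_add]
      norm_num
    · rw [gHom_def, gHom_def, htA, htB]
      show (1 : Multiplicative ℤ) * ofAdd (-k) = ofAdd (-k) * (1 : Multiplicative ℤ)
      simp
  set Φ := HNNExtension.lift (gHom n) (SemidirectProduct.inl yy) cond with hΦ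
  set f₁ : F2 →* HNNExtension (Multiplicative (ℤ × ℤ)) (Subgroup.zpowers b⁻¹)
      (Subgroup.zpowers (a ^ n * b⁻¹)) φ :=
    FreeGroup.lift (fun i => if i = 0 then HNNExtension.of a else HNNExtension.t) with hf₁
  set f₂ : Multiplicative ℤ →* HNNExtension (Multiplicative (ℤ × ℤ)) (Subgroup.zpowers b⁻¹)
      (Subgroup.zpowers (a ^ n * b⁻¹)) φ :=
    zpowersHom _ (HNNExtension.of b) with hf₂
  have hf₁x : f₁ xx = HNNExtension.of a := by simp [hf₁, xx]
  have hf₁y : f₁ yy = HNNExtension.t := by simp [hf₁, yy]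
  -- the key HNN relation
  have hrel : ∀ k : ℤ, (HNNExtension.t : HNNExtension (Multiplicative (ℤ × ℤ))
        (Subgroup.zpowers b⁻¹) (Subgroup.zpowers (a ^ n * b⁻¹)) φ) *
        HNNExtension.of (b⁻¹ ^ k) = HNNExtension.of ((a ^ n * b⁻¹) ^ k) * HNNExtension.t := by
    intro k
    have := HNNExtension.t_mul_of (φ := φ) ((⟨b⁻¹, Subgroup.mem_zpowers _⟩ :
      Subgroup.zpowers b⁻¹) ^ k)
    rwa [hcoe k, hφ' k] at this
  have hGab : ∀ k : ℤ, b ^ k * (a ^ n * b⁻¹) ^ k = a ^ ((n : ℤ) * k) := by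
    intro k
    apply Multiplicative.toAdd.injective
    simp [ha, hb, Prod.ext_iff, mul_comm]
  have keyt : ∀ k : ℤ, HNNExtension.of b ^ k * HNNExtension.t * (HNNExtension.of b ^ k)⁻¹
      = HNNExtension.of (φ := φ) a ^ ((n : ℤ) * k) * HNNExtension.t := by
    intro k
    have h2 : (HNNExtension.of (φ := φ) b ^ k)⁻¹ = HNNExtension.of (b⁻¹ ^ k) := by
      rw [← map_zpow, ← map_inv, inv_zpow]
    rw [h2, mul_assoc, hrel k, ← map_zpow, ← mul_assoc, ← map_mul, hGab k, map_zpow]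
  have cond2 : ∀ z : Multiplicative ℤ,
      f₁.comp ((ψψ n z).toMonoidHom) = (MulAut.conj (f₂ z)).toMonoidHom.comp f₁ := by
    intro z
    apply FreeGroup.ext_hom
    intro i
    have hcomm : ∀ g h : Multiplicative (ℤ × ℤ),
        HNNExtension.of (φ := φ) g * HNNExtension.of h * (HNNExtension.of g)⁻¹ =
          HNNExtension.of h := by
      intro g h
      rw [← map_inv, ← map_mul, ← map_mul, mul_comm g h, mul_assoc, mul_inv_cancel, mul_one]
    fin_cases i
    · show f₁ ((ψψ n z) xx) = MulAut.conj (f₂ z) (f₁ xx)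
      have : (ψψ n z) xx = xx := αpow_x n (toAdd z)
      rw [this, hf₁x, MulAut.conj_apply, hf₂]
      show HNNExtension.of a = HNNExtension.of b ^ toAdd z * HNNExtension.of a *
        (HNNExtension.of b ^ toAdd z)⁻¹
      rw [← map_zpow, hcomm]
    · show f₁ ((ψψ n z) yy) = MulAut.conj (f₂ z) (f₁ yy)
      have : (ψψ n z) yy = xx ^ ((n : ℤ) * toAdd z) * yy := αpow_y n (toAdd z)
      rw [this, map_mul, map_zpow, hf₁x, hf₁y, MulAut.conj_apply, hf₂]
      show HNNExtension.of a ^ ((n : ℤ) * toAdd z) * HNNExtension.t =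
        HNNExtension.of b ^ toAdd z * HNNExtension.t * (HNNExtension.of b ^ toAdd z)⁻¹
      rw [keyt (toAdd z)]
  set Ψ := SemidirectProduct.lift f₁ f₂ cond2 with hΨ
  have h₁ : Ψ.comp Φ = MonoidHom.id _ := by
    apply HNNExtension.hom_ext
    · apply MonoidHom.ext; intro g
      show Ψ (Φ (HNNExtension.of g)) = HNNExtension.of g
      rw [hΦ, HNNExtension.lift_of, gHom_def, SemidirectProduct.mk_eq_inl_mul_inr, map_mul,
        hΨ, SemidirectProduct.lift_inl, SemidirectProduct.lift_inr, map_zpow, hf₁x, hf₂]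
      show HNNExtension.of a ^ (toAdd g).1 * HNNExtension.of b ^ (toAdd g).2 = _
      rw [← map_zpow, ← map_zpow, ← map_mul]
      congr 1
      apply Multiplicative.toAdd.injective
      simp [ha, hb, Prod.ext_iff, mul_comm]
    · show Ψ (Φ HNNExtension.t) = HNNExtension.t
      rw [hΦ, HNNExtension.lift_t, hΨ, SemidirectProduct.lift_inl, hf₁y]
  have h₂ : Φ.comp Ψ = MonoidHom.id _ := by
    apply SemidirectProduct.hom_ext
    · apply FreeGroup.ext_hom
      intro i
      fin_cases i
      · show Φ (Ψ (SemidirectProduct.inl xx)) = SemidirectProduct.inl xx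
        rw [hΨ, SemidirectProduct.lift_inl, hf₁x, hΦ, HNNExtension.lift_of, gHom_def]
        ext
        · show xx ^ (toAdd a).1 = xx
          simp [ha]
        · show ofAdd (toAdd a).2 = 1
          simp [ha]
      · show Φ (Ψ (SemidirectProduct.inl yy)) = SemidirectProduct.inl yy
        rw [hΨ, SemidirectProduct.lift_inl, hf₁y, hΦ, HNNExtension.lift_t]
    · apply MonoidHom.ext_mint
      show Φ (Ψ (SemidirectProduct.inr (ofAdd 1))) = SemidirectProduct.inr (ofAdd 1)
      rw [hΨ, SemidirectProduct.lift_inr, hf₂]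
      show Φ (HNNExtension.of b ^ toAdd (ofAdd (1:ℤ))) = _
      rw [toAdd_ofAdd, zpow_one, hΦ, HNNExtension.lift_of, gHom_def]
      ext
      · show xx ^ (toAdd b).1 = 1
        simp [hb]
      · show ofAdd (toAdd b).2 = ofAdd (1:ℤ)
        simp [hb]
  exact MonoidHom.toMulEquiv Φ Ψ h₁ h₂
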